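/- With R_k as above, R_0 + R_3 = I_1 ⊗ [ |0⟩⟨0|_3 ⊗ (|B_0⟩⟨B_0| + |B_3⟩⟨B_3|)_{24} + |1⟩⟨1|_3 ⊗ (|B_1⟩⟨B_1| + |B_2⟩⟨B_2|)_{24} ], and this operator equals (I + σ_3⊗σ_3⊗σ_3)/2 acting on qubits 2, 3, 4 (tensored with I_1), i.e., the projector onto even parity in the computational basis of qubits 2, 3, 4. -/

import Mathlib

open Matrix Kronecker

noncomputable section

def σ1 : Matrix (Fin 2) (Fin 2) ℂ := !![0, 1; 1, 0]
def σ2 : Matrix (Fin 2) (Fin 2) ℂ := !![0, -Complex.I; Complex.I, 0]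
def σ3 : Matrix (Fin 2) (Fin 2) ℂ := !![1, 0; 0, -1]
def pauli : Fin 4 → Matrix (Fin 2) (Fin 2) ℂ := ![1, σ1, σ2, σ3]

/-- |EPR⟩ = (|00⟩ + |11⟩)/√2 -/
def EPR : Fin 2 × Fin 2 → ℂ := fun p => if p.1 = p.2 then (Real.sqrt 2)⁻¹ else 0

/-- Bell states |B_j⟩ = (I ⊗ σ_j)|EPR⟩ -/
def bell (j : Fin 4) : Fin 2 × Fin 2 → ℂ :=
  ((1 : Matrix (Fin 2) (Fin 2) ℂ) ⊗ₖ pauli j).mulVec EPR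

/-- |B_j⟩⟨B_j| -/
def bellProj (j : Fin 4) : Matrix (Fin 2 × Fin 2) (Fin 2 × Fin 2) ℂ :=
  Matrix.vecMulVec (bell j) (fun p => starRingEnd ℂ (bell j p))

/-- The C-NOT gate: U|ab⟩ = |a⟩|a⊕b⟩. -/
def CNOT : Matrix (Fin 2 × Fin 2) (Fin 2 × Fin 2) ℂ :=
  fun p q => if p.1 = q.1 ∧ p.2 = q.1 + q.2 then 1 else 0

/-- State space index for qubits 1,2,3,4. -/
abbrev Q4 := Fin 2 × Fin 2 × Fin 2 × Fin 2

/-- Embed a two-qubit operator, acting on qubits 1 and 3, into the four-qubit space. -/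
def on13 (M : Matrix (Fin 2 × Fin 2) (Fin 2 × Fin 2) ℂ) : Matrix Q4 Q4 ℂ :=
  fun a b => M (a.1, a.2.2.1) (b.1, b.2.2.1) *
    (if a.2.1 = b.2.1 ∧ a.2.2.2 = b.2.2.2 then 1 else 0)

/-- Embed a two-qubit operator, acting on qubits 2 and 4, into the four-qubit space. -/
def on24 (M : Matrix (Fin 2 × Fin 2) (Fin 2 × Fin 2) ℂ) : Matrix Q4 Q4 ℂ :=
  fun a b => M (a.2.1, a.2.2.2) (b.2.1, b.2.2.2) *
    (if a.1 = b.1 ∧ a.2.2.1 = b.2.2.1 then 1 else 0)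

/-- Embed a two-qubit operator, acting on qubits 3 and 4, into the four-qubit space. -/
def on34 (M : Matrix (Fin 2 × Fin 2) (Fin 2 × Fin 2) ℂ) : Matrix Q4 Q4 ℂ :=
  fun a b => M (a.2.2.1, a.2.2.2) (b.2.2.1, b.2.2.2) *
    (if a.1 = b.1 ∧ a.2.1 = b.2.1 then 1 else 0)

/-- Embed a three-qubit operator, acting on qubits 1, 3 and 4, into the four-qubit space. -/
def on134 (M : Matrix (Fin 2 × Fin 2 × Fin 2) (Fin 2 × Fin 2 × Fin 2) ℂ) : Matrix Q4 Q4 ℂ :=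
  fun a b => M (a.1, a.2.2.1, a.2.2.2) (b.1, b.2.2.1, b.2.2.2) *
    (if a.2.1 = b.2.1 then 1 else 0)

/-- Embed a three-qubit operator, acting on qubits 2, 3 and 4, into the four-qubit space. -/
def on234 (M : Matrix (Fin 2 × Fin 2 × Fin 2) (Fin 2 × Fin 2 × Fin 2) ℂ) : Matrix Q4 Q4 ℂ :=
  fun a b => M (a.2.1, a.2.2.1, a.2.2.2) (b.2.1, b.2.2.1, b.2.2.2) *
    (if a.1 = b.1 then 1 else 0)

/-- Q_j = (I₁₂ ⊗ U₃₄)(|B_j⟩⟨B_j|₁₃ ⊗ I₂₄)(I₁₂ ⊗ U†₃₄), U the C-NOT gate. -/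
def Qop (j : Fin 4) : Matrix Q4 Q4 ℂ :=
  on34 CNOT * on13 (bellProj j) * on34 CNOTᴴ

/-- R_k = I₁ ⊗ (I₂ ⊗ U₃₄)(I₃ ⊗ |B_k⟩⟨B_k|₂₄)(I₂ ⊗ U†₃₄), U the C-NOT gate. -/
def Rop (k : Fin 4) : Matrix Q4 Q4 ℂ :=
  on34 CNOT * on24 (bellProj k) * on34 CNOTᴴ

/-- I₁ ⊗ |c⟩⟨c|₃ ⊗ M₂₄ on the four-qubit space. -/
def mix4 (c : Fin 2) (M : Matrix (Fin 2 × Fin 2) (Fin 2 × Fin 2) ℂ) : Matrix Q4 Q4 ℂ :=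
  fun a b => (if a.1 = b.1 then 1 else 0) *
    (if a.2.2.1 = c then 1 else 0) * (if b.2.2.1 = c then 1 else 0) *
    M (a.2.1, a.2.2.2) (b.2.1, b.2.2.2)

/-- I₁ tensored with the projector onto even parity of qubits 2, 3, 4
in the computational basis. -/
def evenParity234 : Matrix Q4 Q4 ℂ :=
  fun a b => if a = b ∧ a.2.1 + a.2.2.1 + a.2.2.2 = 0 then 1 else 0

lemma cnot_left (M : Matrix Q4 Q4 ℂ) :
    on34 CNOT * M = fun a b => M (a.1, a.2.1, a.2.2.1, a.2.2.1 + a.2.2.2) b := by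
  ext ⟨a1, a2, a3, a4⟩ b
  simp only [Matrix.mul_apply, on34, CNOT, Fintype.sum_prod_type, Fin.sum_univ_two]
  fin_cases a1 <;> fin_cases a2 <;> fin_cases a3 <;> fin_cases a4 <;> simp

lemma cnot_right (M : Matrix Q4 Q4 ℂ) :
    M * on34 CNOTᴴ = fun a b => M a (b.1, b.2.1, b.2.2.1, b.2.2.1 + b.2.2.2) := by
  ext a ⟨b1, b2, b3, b4⟩
  simp only [Matrix.mul_apply, on34, CNOT, Matrix.conjTranspose_apply, Fintype.sum_prod_type,
    Fin.sum_univ_two]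
  fin_cases b1 <;> fin_cases b2 <;> fin_cases b3 <;> fin_cases b4 <;> simp

lemma sqrt2_inv_mul : ((Real.sqrt 2 : ℂ))⁻¹ * ((Real.sqrt 2 : ℂ))⁻¹ = 1/2 := by
  rw [← mul_inv]
  norm_cast
  rw [Real.mul_self_sqrt (by norm_num)]
  norm_num

lemma B03 : bellProj 0 + bellProj 3
    = fun p q => if p.1 = p.2 ∧ q.1 = q.2 ∧ p.1 = q.1 then 1 else 0 := by
  ext ⟨a, b⟩ ⟨c, d⟩
  fin_cases a <;> fin_cases b <;> fin_cases c <;> fin_cases d <;>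
    simp [bellProj, bell, EPR, pauli, σ1, σ2, σ3, Matrix.mulVec, Matrix.vecMulVec,
      dotProduct, Fintype.sum_prod_type, Fin.sum_univ_two, Matrix.kroneckerMap_apply,
      Matrix.one_apply, sqrt2_inv_mul, map_inv₀] <;>
    ring_nf <;>
    norm_num [sqrt2_inv_mul, sqrt2_inv_sq, sqrt2_sq, Complex.I_sq]

lemma sqrt2_inv_sq : ((Real.sqrt 2 : ℂ))⁻¹ ^ 2 = 1/2 := by
  rw [sq, sqrt2_inv_mul]

lemma sqrt2_sq : ((Real.sqrt 2 : ℂ)) ^ 2 = 2 := by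
  norm_cast
  rw [Real.sq_sqrt] <;> norm_num

lemma B12 : bellProj 1 + bellProj 2
    = fun p q => if p.1 ≠ p.2 ∧ q.1 ≠ q.2 ∧ p.1 = q.1 then 1 else 0 := by
  ext ⟨a, b⟩ ⟨c, d⟩
  fin_cases a <;> fin_cases b <;> fin_cases c <;> fin_cases d <;>
    simp [bellProj, bell, EPR, pauli, σ1, σ2, σ3, Matrix.mulVec, Matrix.vecMulVec,
      dotProduct, Fintype.sum_prod_type, Fin.sum_univ_two, Matrix.kroneckerMap_apply,
      Matrix.one_apply, sqrt2_inv_mul, map_inv₀] <;>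
    ring_nf <;>
    norm_num [sqrt2_inv_mul, sqrt2_inv_sq, sqrt2_sq, Complex.I_sq]

lemma Rop_eq (k : Fin 4) : Rop k = fun a b =>
    on24 (bellProj k) (a.1, a.2.1, a.2.2.1, a.2.2.1 + a.2.2.2)
      (b.1, b.2.1, b.2.2.1, b.2.2.1 + b.2.2.2) := by
  rw [Rop, mul_assoc, cnot_right]
  exact cnot_left _

lemma key : Rop 0 + Rop 3 = fun a b =>
    (if a.2.1 = a.2.2.1 + a.2.2.2 ∧ b.2.1 = b.2.2.1 + b.2.2.2 ∧ a.2.1 = b.2.1 then 1 else 0) *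
    (if a.1 = b.1 ∧ a.2.2.1 = b.2.2.1 then 1 else 0) := by
  ext a b
  have h := congrFun (congrFun B03 (a.2.1, a.2.2.1 + a.2.2.2)) (b.2.1, b.2.2.1 + b.2.2.2)
  rw [Matrix.add_apply] at h
  rw [Matrix.add_apply, Rop_eq, Rop_eq]
  simp only [on24, ← add_mul, h]

set_option maxHeartbeats 1000000 in
lemma goal3 : Rop 0 + Rop 3 = evenParity234 := by
  rw [key]
  ext ⟨a1, a2, a3, a4⟩ ⟨b1, b2, b3, b4⟩
  fin_cases a2 <;> fin_cases a3 <;> fin_cases a4 <;>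
    fin_cases b2 <;> fin_cases b3 <;> fin_cases b4 <;>
    simp [evenParity234, Prod.ext_iff]

set_option maxHeartbeats 1000000 in
lemma goal1 : evenParity234
    = mix4 0 (bellProj 0 + bellProj 3) + mix4 1 (bellProj 1 + bellProj 2) := by
  rw [B03, B12]
  ext ⟨a1, a2, a3, a4⟩ ⟨b1, b2, b3, b4⟩
  fin_cases a2 <;> fin_cases a3 <;> fin_cases a4 <;>
    fin_cases b2 <;> fin_cases b3 <;> fin_cases b4 <;>
    simp [evenParity234, mix4, Prod.ext_iff]

set_option maxHeartbeats 1000000 in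
lemma goal2 : evenParity234 = on234 ((1 / 2 : ℂ) • (1 + σ3 ⊗ₖ (σ3 ⊗ₖ σ3))) := by
  ext ⟨a1, a2, a3, a4⟩ ⟨b1, b2, b3, b4⟩
  fin_cases a2 <;> fin_cases a3 <;> fin_cases a4 <;>
    fin_cases b2 <;> fin_cases b3 <;> fin_cases b4 <;>
    simp [evenParity234, on234, σ3, Matrix.kroneckerMap_apply, Matrix.one_apply,
      Matrix.smul_apply, Matrix.add_apply, Prod.ext_iff] <;> norm_num

theorem R0_add_R3 :
    Rop 0 + Rop 3
        = mix4 0 (bellProj 0 + bellProj 3) + mix4 1 (bellProj 1 + bellProj 2) ∧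
    Rop 0 + Rop 3 = on234 ((1 / 2 : ℂ) • (1 + σ3 ⊗ₖ (σ3 ⊗ₖ σ3))) ∧
    Rop 0 + Rop 3 = evenParity234 :=
  ⟨goal3.trans goal1, goal3.trans goal2, goal3⟩
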